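/- Let H and G be Hilbert algebras and f : H → G a function such that f(1) = 1 and f(a→b) ≤ f(a)→f(b) for all a,b ∈ H. Then the following are equivalent: (1) f(a→b) = f(a)→f(b) for all a,b ∈ H (i.e., f is a homomorphism); (2) for every irreducible implicative filter P of G and every irreducible implicative filter Q of H with f⁻¹(P) ⊆ Q, there exists an irreducible implicative filter F of G such that P ⊆ F and f⁻¹(F) = Q. -/

import Mathlib

/-- A Hilbert algebra `(H, →, 1)`. -/
structure HilbertAlgebra (H : Type*) where
  imp : H → H → H
  one : H
  ax1 : ∀ a b : H, imp a (imp b a) = one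
  ax2 : ∀ a b c : H, imp (imp a (imp b c)) (imp (imp a b) (imp a c)) = one
  ax3 : ∀ a b : H, imp a b = one → imp b a = one → a = b

namespace HilbertAlgebra

variable {H : Type*} (hH : HilbertAlgebra H)

/-- The natural order: `a ≤ b` iff `a → b = 1`. -/
def le (a b : H) : Prop := hH.imp a b = hH.one

/-- Implicative filter. -/
def IsImplicativeFilter (F : Set H) : Prop :=
  hH.one ∈ F ∧ ∀ a b : H, a ∈ F → hH.imp a b ∈ F → b ∈ F

/-- Irreducible implicative filter. -/
def IsIrreducible (F : Set H) : Prop :=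
  hH.IsImplicativeFilter F ∧ F ≠ Set.univ ∧
    ∀ F₁ F₂ : Set H, hH.IsImplicativeFilter F₁ → hH.IsImplicativeFilter F₂ →
      F = F₁ ∩ F₂ → (F = F₁ ∨ F = F₂)

/-- Order-ideal: nonempty, downward closed, up-directed (w.r.t. the natural order). -/
def IsOrderIdeal (I : Set H) : Prop :=
  I.Nonempty ∧ (∀ a b : H, b ∈ I → hH.le a b → a ∈ I) ∧
    ∀ a b : H, a ∈ I → b ∈ I → ∃ c ∈ I, hH.le a c ∧ hH.le b c

/-- `φ(a) = {P ∈ X(H) : a ∈ P}`. -/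
def phi (a : H) : Set (Set H) := {P | hH.IsIrreducible P ∧ a ∈ P}

/-- An upset of `X(H)` (the poset of irreducible implicative filters, ordered by `⊆`). -/
def IsUpsetX (U : Set (Set H)) : Prop :=
  (∀ P ∈ U, hH.IsIrreducible P) ∧
    ∀ P Q : Set H, P ∈ U → hH.IsIrreducible Q → P ⊆ Q → Q ∈ U

/-- The Heyting implication `U ⇒ V` on upsets of `X(H)`. -/
def impUps (U V : Set (Set H)) : Set (Set H) :=
  {P | hH.IsIrreducible P ∧ ∀ Q : Set H, hH.IsIrreducible Q → P ⊆ Q → Q ∈ U → Q ∈ V}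

/-- `FC(H)`: finite nonempty intersections of sets of the form `φ(a)`. -/
def FC : Set (Set (Set H)) :=
  {U | ∃ l : List H, l ≠ [] ∧ U = ⋂ a ∈ l, hH.phi a}

/-- `X*(H)`: implicative filters that are intersections of finitely many (at least one)
irreducible implicative filters. -/
def XStar : Set (Set H) :=
  {F | ∃ S : Set (Set H), S.Finite ∧ S.Nonempty ∧ (∀ P ∈ S, hH.IsIrreducible P) ∧ F = ⋂₀ S}

/-- `Φ(a) = {F ∈ X*(H) : a ∈ F}`. -/
def Phi (a : H) : Set (Set H) := {F | F ∈ hH.XStar ∧ a ∈ F}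

/-- An upset of `X*(H)` (ordered by `⊆`). -/
def IsUpsetXStar (U : Set (Set H)) : Prop :=
  (∀ F ∈ U, F ∈ hH.XStar) ∧
    ∀ F K : Set H, F ∈ U → K ∈ hH.XStar → F ⊆ K → K ∈ U

/-- The implication `U ⇒ V` on upsets of `X*(H)`. -/
def impUpsStar (U V : Set (Set H)) : Set (Set H) :=
  {F | F ∈ hH.XStar ∧ ∀ K : Set H, K ∈ hH.XStar → F ⊆ K → K ∈ U → K ∈ V}

/-- Homomorphism of Hilbert algebras. -/
def IsHom {G : Type*} (hG : HilbertAlgebra G) (f : H → G) : Prop :=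
  f hH.one = hG.one ∧ ∀ a b : H, f (hH.imp a b) = hG.imp (f a) (f b)

end HilbertAlgebra

/-- A Hilbert algebra with supremum: `(H, ∨)` is a join-semilattice whose induced
order has greatest element `1`, and `a → b = 1` iff `a ∨ b = b`. -/
structure HilbertSup (H : Type*) extends HilbertAlgebra H where
  sup : H → H → H
  sup_comm : ∀ a b : H, sup a b = sup b a
  sup_assoc : ∀ a b c : H, sup (sup a b) c = sup a (sup b c)
  sup_idem : ∀ a : H, sup a a = a
  sup_one : ∀ a : H, sup a one = one
  imp_eq_one_iff : ∀ a b : H, imp a b = one ↔ sup a b = b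

/-- Morphism of Hilbert algebras with supremum. -/
def HilbertSup.IsHomSup {H G : Type*} (hH : HilbertSup H) (hG : HilbertSup G)
    (f : H → G) : Prop :=
  hH.toHilbertAlgebra.IsHom hG.toHilbertAlgebra f ∧
    ∀ a b : H, f (hH.sup a b) = hG.sup (f a) (f b)

/-- An implicative semilattice: a meet-semilattice with greatest element and a binary
operation `him` such that `a ⊓ b ≤ c ↔ a ≤ him b c`. -/
class ImplicativeSemilattice (G : Type*) extends SemilatticeInf G, OrderTop G where
  him : G → G → G
  inf_le_iff_le_him : ∀ a b c : G, a ⊓ b ≤ c ↔ a ≤ him b c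

namespace HilbertAlgebra

variable {H : Type*} (hH : HilbertAlgebra H)

lemma hhR {x : H} (h : hH.imp hH.one x = hH.one) : x = hH.one := by
  have h2 := hH.ax1 x hH.one
  rw [h] at h2
  exact hH.ax3 x hH.one h2 h

lemma imp_one (a : H) : hH.imp a hH.one = hH.one :=
  hH.hhR (hH.ax1 hH.one a)

lemma imp_self (a : H) : hH.imp a a = hH.one := by
  have s := hH.ax2 a hH.one a
  rw [hH.ax1 a hH.one] at s
  have s2 := hH.hhR s
  rw [hH.imp_one a] at s2
  exact hH.hhR s2

lemma mp_one {a b : H} (hab : hH.imp a b = hH.one) (ha : a = hH.one) : b = hH.one := by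
  subst ha; exact hH.hhR hab

lemma le_trans' {a b c : H} (h1 : hH.imp a b = hH.one) (h2 : hH.imp b c = hH.one) :
    hH.imp a c = hH.one := by
  have s := hH.ax2 a b c
  have hbc : hH.imp a (hH.imp b c) = hH.one := by rw [h2]; exact hH.imp_one a
  have s2 := hH.mp_one s hbc
  rw [h1] at s2
  exact hH.hhR s2

lemma filt_up {F : Set H} (hF : hH.IsImplicativeFilter F) {a b : H} (ha : a ∈ F)
    (hab : hH.imp a b = hH.one) : b ∈ F :=
  hF.2 a b ha (by rw [hab]; exact hF.1)

lemma filt_mp {F : Set H} (hF : hH.IsImplicativeFilter F) {a b : H} (ha : a ∈ F)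
    (hab : hH.imp a b ∈ F) : b ∈ F := hF.2 a b ha hab

lemma filt_impset {F : Set H} (hF : hH.IsImplicativeFilter F) (a : H) :
    hH.IsImplicativeFilter {x | hH.imp a x ∈ F} := by
  constructor
  · show hH.imp a hH.one ∈ F
    rw [hH.imp_one]; exact hF.1
  · intro x y hx hxy
    have s : hH.imp a (hH.imp x y) ∈ F := hxy
    have s2 : hH.imp (hH.imp a x) (hH.imp a y) ∈ F :=
      hH.filt_mp hF s (by rw [hH.ax2 a x y]; exact hF.1)
    exact hH.filt_mp hF hx s2

lemma principal_filter (x : H) : hH.IsImplicativeFilter {y | hH.imp x y = hH.one} := by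
  constructor
  · exact hH.imp_one x
  · intro a b ha hab
    have s := hH.ax2 x a b
    have s2 := hH.mp_one s hab
    rw [ha] at s2
    exact hH.hhR s2

/-- Separation: extend a filter avoiding b to an irreducible one. -/
lemma separation {F : Set H} (hF : hH.IsImplicativeFilter F) {b : H} (hb : b ∉ F) :
    ∃ Q : Set H, hH.IsIrreducible Q ∧ F ⊆ Q ∧ b ∉ Q := by
  set S : Set (Set H) := {F' | hH.IsImplicativeFilter F' ∧ F ⊆ F' ∧ b ∉ F'} with hS
  have hchain : ∀ c ⊆ S, IsChain (fun x1 x2 => x1 ⊆ x2) c → c.Nonempty →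
      ∃ ub ∈ S, ∀ s ∈ c, s ⊆ ub := by
    intro c hcS hchain ⟨F₀, hF₀⟩
    refine ⟨⋃₀ c, ⟨⟨?_, ?_⟩, ?_, ?_⟩, fun s hs => Set.subset_sUnion_of_mem hs⟩
    · exact ⟨F₀, hF₀, (hcS hF₀).1.1⟩
    · rintro a b' ⟨Fa, hFa, ha⟩ ⟨Fb, hFb, hab⟩
      rcases hchain.total hFa hFb with h | h
      · exact ⟨Fb, hFb, (hcS hFb).1.2 a b' (h ha) hab⟩
      · exact ⟨Fa, hFa, (hcS hFa).1.2 a b' ha (h hab)⟩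
    · exact (hcS hF₀).2.1.trans (Set.subset_sUnion_of_mem hF₀)
    · rintro ⟨Fa, hFa, hbFa⟩
      exact (hcS hFa).2.2 hbFa
  obtain ⟨M, hFM, hMmax⟩ := zorn_subset_nonempty S hchain F ⟨hF, subset_rfl, hb⟩
  have hMS : M ∈ S := hMmax.1
  refine ⟨M, ⟨hMS.1, ?_, ?_⟩, hMS.2.1, hMS.2.2⟩
  · intro h
    exact hMS.2.2 (h ▸ Set.mem_univ b)
  · intro F₁ F₂ hF₁ hF₂ hM12
    by_contra hcon
    push_neg at hcon
    have hMF₁ : M ⊆ F₁ := hM12 ▸ Set.inter_subset_left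
    have hMF₂ : M ⊆ F₂ := hM12 ▸ Set.inter_subset_right
    have hb₁ : b ∈ F₁ := by
      by_contra hbF₁
      exact hcon.1 (hMmax.eq_of_subset ⟨hF₁, hMS.2.1.trans hMF₁, hbF₁⟩ hMF₁)
    have hb₂ : b ∈ F₂ := by
      by_contra hbF₂
      exact hcon.2 (hMmax.eq_of_subset ⟨hF₂, hMS.2.1.trans hMF₂, hbF₂⟩ hMF₂)
    exact hMS.2.2 (hM12 ▸ ⟨hb₁, hb₂⟩)

lemma irr_directed {Q : Set H} (hQ : hH.IsIrreducible Q) {x₁ x₂ : H} (h1 : x₁ ∉ Q)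
    (h2 : x₂ ∉ Q) : ∃ c, c ∉ Q ∧ hH.imp x₁ c ∈ Q ∧ hH.imp x₂ c ∈ Q := by
  by_contra hcon
  push_neg at hcon
  have hF₁ := hH.filt_impset hQ.1 x₁
  have hF₂ := hH.filt_impset hQ.1 x₂
  have hQeq : Q = {x | hH.imp x₁ x ∈ Q} ∩ {x | hH.imp x₂ x ∈ Q} := by
    apply Set.Subset.antisymm
    · intro x hx
      constructor
      · exact hH.filt_up hQ.1 hx (hH.ax1 x x₁)
      · exact hH.filt_up hQ.1 hx (hH.ax1 x x₂)
    · rintro c ⟨hc1, hc2⟩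
      by_contra hc
      exact (hcon c hc hc1) hc2
  rcases hQ.2.2 _ _ hF₁ hF₂ hQeq with h | h
  · apply h1
    rw [h]
    show hH.imp x₁ x₁ ∈ Q
    rw [hH.imp_self]; exact hQ.1.1
  · apply h2
    rw [h]
    show hH.imp x₂ x₂ ∈ Q
    rw [hH.imp_self]; exact hQ.1.1

def foldImp (l : List H) (x : H) : H := l.foldr hH.imp x

lemma foldImp_nil (x : H) : hH.foldImp [] x = x := rfl
lemma foldImp_cons (q : H) (l : List H) (x : H) :
    hH.foldImp (q :: l) x = hH.imp q (hH.foldImp l x) := rfl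
lemma foldImp_append (l₁ l₂ : List H) (x : H) :
    hH.foldImp (l₁ ++ l₂) x = hH.foldImp l₁ (hH.foldImp l₂ x) :=
  List.foldr_append

lemma filt_foldset {F : Set H} (hF : hH.IsImplicativeFilter F) (l : List H) :
    hH.IsImplicativeFilter {x | hH.foldImp l x ∈ F} := by
  induction l generalizing F with
  | nil => exact hF
  | cons q l ih =>
    have := ih (hH.filt_impset hF q)
    exact this

lemma fold_weaken {F : Set H} (hF : hH.IsImplicativeFilter F) (l : List H) {u : H}
    (hu : u ∈ F) : hH.foldImp l u ∈ F := by
  induction l with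
  | nil => exact hu
  | cons q l ih => exact hH.filt_up hF ih (hH.ax1 _ q)

lemma fold_elim {Q : Set H} (hQ : hH.IsImplicativeFilter Q) {l : List H}
    (hl : ∀ q ∈ l, q ∈ Q) {x : H} (hx : hH.foldImp l x ∈ Q) : x ∈ Q := by
  induction l with
  | nil => exact hx
  | cons q l ih =>
    exact ih (fun r hr => hl r (List.mem_cons_of_mem q hr))
      (hH.filt_mp hQ (hl q List.mem_cons_self) hx)

end HilbertAlgebra

namespace HilbertAlgebra
variable {H : Type*} (hH : HilbertAlgebra H)

lemma hom_fold {G : Type*} (hG : HilbertAlgebra G) (f : H → G)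
    (hhom : ∀ a b : H, f (hH.imp a b) = hG.imp (f a) (f b)) (l : List H) (x : H) :
    f (hH.foldImp l x) = hG.foldImp (l.map f) (f x) := by
  induction l with
  | nil => rfl
  | cons q l ih =>
    show f (hH.imp q (hH.foldImp l x)) = hG.imp (f q) (hG.foldImp (l.map f) (f x))
    rw [hhom, ih]

end HilbertAlgebra

theorem stmt_5 {H G : Type*} (hH : HilbertAlgebra H) (hG : HilbertAlgebra G) (f : H → G)
    (hf1 : f hH.one = hG.one)
    (hf2 : ∀ a b : H, hG.le (f (hH.imp a b)) (hG.imp (f a) (f b))) :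
    (∀ a b : H, f (hH.imp a b) = hG.imp (f a) (f b)) ↔
      (∀ (P : Set G) (Q : Set H), hG.IsIrreducible P → hH.IsIrreducible Q → f ⁻¹' P ⊆ Q →
        ∃ F : Set G, hG.IsIrreducible F ∧ P ⊆ F ∧ f ⁻¹' F = Q) := by
  constructor
  · -- forward: hom ⇒ extension property
    intro hhom P Q hP hQ hsub
    set F₀ : Set G := {y | ∃ l : List H, (∀ q ∈ l, q ∈ Q) ∧ hG.foldImp (l.map f) y ∈ P}
      with hF₀def
    have hF₀filt : hG.IsImplicativeFilter F₀ := by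
      constructor
      · exact ⟨[], by simp, hP.1.1⟩
      · rintro a b ⟨l₁, hl₁Q, hl₁⟩ ⟨l₂, hl₂Q, hl₂⟩
        refine ⟨l₂ ++ l₁, ?_, ?_⟩
        · intro q hq
          rcases List.mem_append.1 hq with h | h
          · exact hl₂Q q h
          · exact hl₁Q q h
        · set L₁ := l₁.map f
          set L₂ := l₂.map f
          have hP₂ := hG.filt_foldset hP.1 L₂
          have hT := hG.filt_foldset hP₂ L₁
          have ha : hG.foldImp L₂ (hG.foldImp L₁ a) ∈ P := hG.fold_weaken hP.1 L₂ hl₁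
          have hab : hG.foldImp L₁ (hG.imp a b) ∈ {v | hG.foldImp L₂ v ∈ P} :=
            hG.fold_weaken hP₂ L₁ hl₂
          have hb : hG.foldImp L₂ (hG.foldImp L₁ b) ∈ P := hG.filt_mp hT ha hab
          rw [List.map_append, hG.foldImp_append]
          exact hb
    have hPF₀ : P ⊆ F₀ := fun y hy => ⟨[], by simp, hy⟩
    have hfQ : ∀ q ∈ Q, f q ∈ F₀ := by
      intro q hq
      refine ⟨[q], by simpa using hq, ?_⟩
      show hG.imp (f q) (f q) ∈ P
      rw [hG.imp_self]
      exact hP.1.1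
    have hpre : ∀ x : H, f x ∈ F₀ → x ∈ Q := by
      rintro x ⟨l, hlQ, hfold⟩
      rw [← hH.hom_fold hG f hhom l x] at hfold
      exact hH.fold_elim hQ.1 hlQ (hsub hfold)
    set S : Set (Set G) := {F | hG.IsImplicativeFilter F ∧ P ⊆ F ∧
      (∀ q ∈ Q, f q ∈ F) ∧ ∀ x : H, f x ∈ F → x ∈ Q} with hSdef
    have hchain : ∀ c ⊆ S, IsChain (fun x1 x2 => x1 ⊆ x2) c → c.Nonempty →
        ∃ ub ∈ S, ∀ s ∈ c, s ⊆ ub := by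
      intro c hcS hch ⟨K₀, hK₀⟩
      refine ⟨⋃₀ c, ⟨⟨⟨K₀, hK₀, (hcS hK₀).1.1⟩, ?_⟩, ?_, ?_, ?_⟩,
        fun s hs => Set.subset_sUnion_of_mem hs⟩
      · rintro a b ⟨Fa, hFa, ha⟩ ⟨Fb, hFb, hab⟩
        rcases hch.total hFa hFb with h | h
        · exact ⟨Fb, hFb, (hcS hFb).1.2 a b (h ha) hab⟩
        · exact ⟨Fa, hFa, (hcS hFa).1.2 a b ha (h hab)⟩
      · exact (hcS hK₀).2.1.trans (Set.subset_sUnion_of_mem hK₀)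
      · exact fun q hq => ⟨K₀, hK₀, (hcS hK₀).2.2.1 q hq⟩
      · rintro x ⟨Fa, hFa, hx⟩
        exact (hcS hFa).2.2.2 x hx
    obtain ⟨M, hF₀M, hMmax⟩ := zorn_subset_nonempty S hchain F₀ ⟨hF₀filt, hPF₀, hfQ, hpre⟩
    have hMS : M ∈ S := hMmax.1
    refine ⟨M, ⟨hMS.1, ?_, ?_⟩, hMS.2.1, ?_⟩
    · intro huniv
      exact hQ.2.1 (Set.eq_univ_of_forall fun x =>
        hMS.2.2.2 x (huniv ▸ Set.mem_univ (f x)))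
    · intro F₁ F₂ hF₁ hF₂ hM12
      by_contra hcon
      push_neg at hcon
      have hMF₁ : M ⊆ F₁ := hM12 ▸ Set.inter_subset_left
      have hMF₂ : M ⊆ F₂ := hM12 ▸ Set.inter_subset_right
      have hx₁ : ∃ x, f x ∈ F₁ ∧ x ∉ Q := by
        by_contra hc
        push_neg at hc
        exact hcon.1 (hMmax.eq_of_subset
          ⟨hF₁, hMS.2.1.trans hMF₁, fun q hq => hMF₁ (hMS.2.2.1 q hq),
            fun x hx => hc x hx⟩ hMF₁)
      have hx₂ : ∃ x, f x ∈ F₂ ∧ x ∉ Q := by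
        by_contra hc
        push_neg at hc
        exact hcon.2 (hMmax.eq_of_subset
          ⟨hF₂, hMS.2.1.trans hMF₂, fun q hq => hMF₂ (hMS.2.2.1 q hq),
            fun x hx => hc x hx⟩ hMF₂)
      obtain ⟨x₁, hfx₁, hx₁Q⟩ := hx₁
      obtain ⟨x₂, hfx₂, hx₂Q⟩ := hx₂
      obtain ⟨c, hcQ, hc₁, hc₂⟩ := hH.irr_directed hQ hx₁Q hx₂Q
      have h₁ : hG.imp (f x₁) (f c) ∈ M := by
        rw [← hhom]; exact hMS.2.2.1 _ hc₁
      have h₂ : hG.imp (f x₂) (f c) ∈ M := by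
        rw [← hhom]; exact hMS.2.2.1 _ hc₂
      have hfc₁ : f c ∈ F₁ := hG.filt_mp hF₁ hfx₁ (hMF₁ h₁)
      have hfc₂ : f c ∈ F₂ := hG.filt_mp hF₂ hfx₂ (hMF₂ h₂)
      have : f c ∈ M := hM12 ▸ ⟨hfc₁, hfc₂⟩
      exact hcQ (hMS.2.2.2 c this)
    · apply Set.Subset.antisymm
      · intro x hx
        exact hMS.2.2.2 x hx
      · intro q hq
        exact hMS.2.2.1 q hq
  · -- backward
    intro hext a b
    refine hG.ax3 _ _ (hf2 a b) ?_
    by_contra hne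
    have hnotin : f (hH.imp a b) ∉ {y | hG.imp (hG.imp (f a) (f b)) y = hG.one} := hne
    obtain ⟨P, hP, hPsub, hPnot⟩ := hG.separation (hG.principal_filter _) hnotin
    have hx : hG.imp (f a) (f b) ∈ P := hPsub (hG.imp_self _)
    have hfP : hH.IsImplicativeFilter (f ⁻¹' P) := by
      constructor
      · show f hH.one ∈ P
        rw [hf1]; exact hP.1.1
      · intro x y hxP hxyP
        exact hG.filt_mp hP.1 hxP (hG.filt_up hP.1 hxyP (hf2 x y))
    have hR := hH.filt_impset hfP a
    have hbR : b ∉ {x | hH.imp a x ∈ f ⁻¹' P} := fun h => hPnot h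
    obtain ⟨Q, hQ, hRQ, hbQ⟩ := hH.separation hR hbR
    have hsub : f ⁻¹' P ⊆ Q := fun x hxP =>
      hRQ (hH.filt_up hfP hxP (hH.ax1 x a))
    have haQ : a ∈ Q := by
      apply hRQ
      show hH.imp a a ∈ f ⁻¹' P
      rw [hH.imp_self]
      show f hH.one ∈ P
      rw [hf1]; exact hP.1.1
    obtain ⟨F, hF, hPF, hfF⟩ := hext P Q hP hQ hsub
    have hfaF : f a ∈ F := by
      have : a ∈ f ⁻¹' F := hfF ▸ haQ
      exact this
    have hfbF : f b ∈ F := hG.filt_mp hF.1 hfaF (hPF hx)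
    exact hbQ (hfF ▸ (hfbF : b ∈ f ⁻¹' F))
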